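/- Let H be an n×n unreduced lower Hessenberg matrix with associated polynomial sequence {q_i}_{0≤i≤n}. If λ is an eigenvalue of H, then λ is a root of q_n. -/

import Mathlib

open Polynomial Matrix

/-- Entry of a matrix viewed with natural-number (0-based) indices; `0` out of range. -/
def entryR {n : ℕ} (H : Matrix (Fin n) (Fin n) ℝ) (i j : ℕ) : ℝ :=
  if h : i < n ∧ j < n then H ⟨i, h.1⟩ ⟨j, h.2⟩ else 0

/-- `H` is an unreduced lower Hessenberg matrix: entries above the superdiagonal vanish
and the superdiagonal entries are nonzero. -/
def IsUnreducedLowerHessenberg {n : ℕ} (H : Matrix (Fin n) (Fin n) ℝ) : Prop :=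
  (∀ i j : ℕ, i + 1 < j → entryR H i j = 0) ∧
  (∀ i : ℕ, i + 1 < n → entryR H i (i + 1) ≠ 0)

/-- `q` is the polynomial sequence associated with the unreduced lower Hessenberg matrix `H`:
`q 0 = 1` and `h_{i,i+1} q_{i+1} = X q_i - ∑_{j ≤ i} h_{i j} q_j` (0-based indices),
with the convention that the superdiagonal entry of the last row is `1`. -/
def IsAssocPolySeq {n : ℕ} (H : Matrix (Fin n) (Fin n) ℝ) (q : ℕ → Polynomial ℝ) : Prop :=
  q 0 = 1 ∧
  ∀ i : ℕ, i < n →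
    Polynomial.C (if i + 1 = n then 1 else entryR H i (i + 1)) * q (i + 1) =
      Polynomial.X * q i - ∑ j ∈ Finset.range (i + 1), Polynomial.C (entryR H i j) * q j

/-- every eigenvalue of `H` is a root of `q n`. -/
theorem eigenvalue_is_root {n : ℕ} (H : Matrix (Fin n) (Fin n) ℝ)
    (hH : IsUnreducedLowerHessenberg H) (q : ℕ → Polynomial ℝ)
    (hq : IsAssocPolySeq H q) (lam : ℝ)
    (hlam : Module.End.HasEigenvalue (Matrix.toLin' H) lam) :
    (q n).eval lam = 0 := by
  obtain ⟨v, hv⟩ := hlam.exists_hasEigenvector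
  have hv0 : v ≠ 0 := hv.right
  have hmul : H.mulVec v = lam • v := by
    have := hv.apply_eq_smul
    simpa [Matrix.toLin'_apply] using this
  -- natural-number indexed version of v
  set u : ℕ → ℝ := fun k => if h : k < n then v ⟨k, h⟩ else 0 with hu
  have row : ∀ i, (hi : i < n) → ∑ j ∈ Finset.range n, entryR H i j * u j = lam * u i := by
    intro i hi
    have h1 : (H.mulVec v) ⟨i, hi⟩ = lam * v ⟨i, hi⟩ := by rw [hmul]; rfl
    have h2 : ∑ j : Fin n, H ⟨i, hi⟩ j * v j = lam * v ⟨i, hi⟩ := by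
      simpa [Matrix.mulVec, dotProduct] using h1
    have h3 : ∀ j : Fin n, entryR H i (j : ℕ) * u (j : ℕ) = H ⟨i, hi⟩ j * v j := by
      intro j
      simp [entryR, hu, hi, j.is_lt, Fin.eta]
    calc ∑ j ∈ Finset.range n, entryR H i j * u j
        = ∑ j : Fin n, entryR H i (j : ℕ) * u (j : ℕ) :=
          (Fin.sum_univ_eq_sum_range (fun j => entryR H i j * u j) n).symm
      _ = ∑ j : Fin n, H ⟨i, hi⟩ j * v j := Finset.sum_congr rfl (fun j _ => h3 j)
      _ = lam * v ⟨i, hi⟩ := h2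
      _ = lam * u i := by simp [hu, hi]
  have main : ∀ k, k < n → u k = u 0 * (q k).eval lam := by
    intro k
    induction k using Nat.strong_induction_on with
    | _ k ih =>
      intro hk
      match k with
      | 0 => simp [hq.1]
      | Nat.succ k =>
        have hkn : k < n := Nat.lt_of_succ_lt hk
        have hk2 : k + 2 ≤ n := hk
        have hsum : ∑ j ∈ Finset.range n, entryR H k j * u j
            = (∑ j ∈ Finset.range (k+1), entryR H k j * u j)
              + entryR H k (k+1) * u (k+1) := by
          rw [← Finset.sum_range_succ]
          exact (Finset.sum_subset (Finset.range_subset_range.mpr hk2) (by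
            intro j hj hj2
            have : k + 1 < j := by
              simp only [Finset.mem_range] at hj hj2
              omega
            rw [hH.1 k j this, zero_mul])).symm
        have hrow := row k hkn
        rw [hsum] at hrow
        have hne : k + 1 ≠ n := Nat.ne_of_lt hk
        have hpoly := hq.2 k hkn
        rw [if_neg hne] at hpoly
        have hpeval : entryR H k (k+1) * (q (k+1)).eval lam
            = lam * (q k).eval lam
              - ∑ j ∈ Finset.range (k+1), entryR H k j * (q j).eval lam := by
          have := congrArg (Polynomial.eval lam) hpoly
          simpa [Polynomial.eval_finset_sum] using this
        have hIH : ∀ j ∈ Finset.range (k+1), entryR H k j * u j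
            = entryR H k j * (u 0 * (q j).eval lam) := by
          intro j hj
          rw [ih j (Finset.mem_range.mp hj)
            (Nat.lt_trans (Finset.mem_range.mp hj) hk)]
        rw [Finset.sum_congr rfl hIH, ih k (Nat.lt_succ_self k) hkn] at hrow
        have hsumrw : u 0 * ∑ j ∈ Finset.range (k+1), entryR H k j * (q j).eval lam
            = ∑ j ∈ Finset.range (k+1), entryR H k j * (u 0 * (q j).eval lam) := by
          rw [Finset.mul_sum]
          exact Finset.sum_congr rfl fun j _ => by ring
        have hstep : entryR H k (k+1) * u (k+1)
            = u 0 * (entryR H k (k+1) * (q (k+1)).eval lam) := by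
          rw [hpeval, mul_sub, hsumrw]
          linear_combination hrow
        have hne0 := hH.2 k hk
        exact mul_left_cancel₀ hne0 (hstep.trans (by ring))
  have hn : n ≠ 0 := by
    intro h
    subst h
    exact hv0 (Subsingleton.elim v 0)
  obtain ⟨m, rfl⟩ := Nat.exists_eq_succ_of_ne_zero hn
  have hm : m < m + 1 := Nat.lt_succ_self m
  have hrow := row m hm
  have hpoly := hq.2 m hm
  rw [if_pos rfl, Polynomial.C_1, one_mul] at hpoly
  have hpeval : (q (m+1)).eval lam
      = lam * (q m).eval lam
        - ∑ j ∈ Finset.range (m+1), entryR H m j * (q j).eval lam := by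
    have := congrArg (Polynomial.eval lam) hpoly
    simpa [Polynomial.eval_finset_sum] using this
  have hIH : ∀ j ∈ Finset.range (m+1), entryR H m j * u j
      = entryR H m j * (u 0 * (q j).eval lam) := by
    intro j hj
    rw [main j (Finset.mem_range.mp hj)]
  rw [Finset.sum_congr rfl hIH, main m hm] at hrow
  have hsumrw : u 0 * ∑ j ∈ Finset.range (m+1), entryR H m j * (q j).eval lam
      = ∑ j ∈ Finset.range (m+1), entryR H m j * (u 0 * (q j).eval lam) := by
    rw [Finset.mul_sum]
    exact Finset.sum_congr rfl fun j _ => by ring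
  have key : u 0 * (q (m+1)).eval lam = 0 := by
    rw [hpeval, mul_sub, hsumrw]
    linear_combination -hrow
  have hu0 : u 0 ≠ 0 := by
    intro h0
    apply hv0
    funext i
    have hmi := main i i.is_lt
    rw [h0, zero_mul] at hmi
    have hui : u (i : ℕ) = v i := by simp [hu, i.is_lt, Fin.eta]; intro h; exact absurd i.is_lt (by omega)
    rw [hui] at hmi
    exact hmi
  exact (mul_eq_zero.mp key).resolve_left hu0
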